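/- arXiv:2412.10753 — 3 statements merged into one kernel-verified Lean document; each statement's English description precedes it below -/
import Mathlib

section
/- Let Σ and Σ₀ be p×p real symmetric positive definite matrices. Let λ₁ ≥ ⋯ ≥ λ_p > 0 be the eigenvalues of Σ and d₁ ≥ ⋯ ≥ d_p > 0 the eigenvalues of Σ₀, and assume min_{l=1,…,p−1} d_l/d_{l+1} > c for some constant c > 1. Then there exist positive constants δ and C depending only on c such that: if p‖Σ₀^{−1/2} Σ Σ₀^{−1/2} − I_p‖₂ < δ, then sup_{k=1,…,p} | λ_k/d_k − 1 | ≤ C p ‖Σ₀^{−1/2} Σ Σ₀^{−1/2} − I_p‖₂ and sup_{k=1,…,p} | √(λ_k)/√(d_k) − 1 | ≤ C p ‖Σ₀^{−1/2} Σ Σ₀^{−1/2} − I_p‖₂. -/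
open Matrix

/-- Spectral norm (ℓ²-operator norm) of a real matrix. -/
noncomputable def sNorm {m n : Type*} [Fintype m] [Fintype n] [DecidableEq n]
    (A : Matrix m n ℝ) : ℝ :=
  ‖LinearMap.toContinuousLinearMap (Matrix.toEuclideanLin A)‖

/-- `eigval A k` is the `k`-th largest eigenvalue (0-based, counted with multiplicity)
of a hermitian (= real symmetric) matrix `A`. -/
noncomputable def eigval {p : ℕ} (A : Matrix (Fin p) (Fin p) ℝ) (k : Fin p) : ℝ :=
  if hA : A.IsHermitian then hA.eigenvalues (Tuple.sort hA.eigenvalues k.rev) else 0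

open Classical in
/-- The positive definite square root of `A⁻¹`, for `A` positive definite. -/
noncomputable def invSqrt {p : ℕ} (A : Matrix (Fin p) (Fin p) ℝ) : Matrix (Fin p) (Fin p) ℝ :=
  if hA : A.PosDef then
    hA.inv.posSemidef.1.eigenvectorUnitary.1 *
      diagonal ((↑) ∘ (√·) ∘ hA.inv.posSemidef.1.eigenvalues) *
      (star hA.inv.posSemidef.1.eigenvectorUnitary : Matrix (Fin p) (Fin p) ℝ)
  else 0

/-! ### Auxiliary lemmas -/

open Finset Module

namespace EigPerturb

variable {p : ℕ} {A B : Matrix (Fin p) (Fin p) ℝ}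

lemma eigval_eq (hA : A.IsHermitian) (k : Fin p) :
    eigval A k = hA.eigenvalues (Tuple.sort hA.eigenvalues k.rev) := by
  rw [eigval, dif_pos hA]

lemma eigval_pos (h : A.PosDef) (k : Fin p) : 0 < eigval A k := by
  rw [eigval_eq h.1 k]; exact h.eigenvalues_pos _

lemma inner_eq_dot (x y : EuclideanSpace ℝ (Fin p)) :
    (inner ℝ x y : ℝ) = dotProduct (WithLp.equiv 2 _ x) (WithLp.equiv 2 _ y) := by
  simp [PiLp.inner_apply, dotProduct, RCLike.inner_apply, mul_comm]

lemma toEuclideanLin_eigvec (hA : A.IsHermitian) (j : Fin p) :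
    Matrix.toEuclideanLin A (hA.eigenvectorBasis j) =
      hA.eigenvalues j • hA.eigenvectorBasis j := by
  have h := hA.mulVec_eigenvectorBasis j
  ext i
  exact congrFun h i

lemma quad_expand (hA : A.IsHermitian) (v : EuclideanSpace ℝ (Fin p)) :
    (inner ℝ v (Matrix.toEuclideanLin A v) : ℝ) =
      ∑ i, hA.eigenvalues i * (hA.eigenvectorBasis.repr v i)^2 := by
  set b := hA.eigenvectorBasis with hb
  have hT : Matrix.toEuclideanLin A v = ∑ i, (b.repr v i * hA.eigenvalues i) • b i := by
    conv_lhs => rw [← b.sum_repr v, map_sum]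
    refine Finset.sum_congr rfl fun i _ => ?_
    rw [_root_.map_smul, toEuclideanLin_eigvec hA i, smul_smul, mul_comm]
  rw [hT, inner_sum]
  refine Finset.sum_congr rfl fun i _ => ?_
  rw [real_inner_smul_right, real_inner_comm, ← b.repr_apply_apply]
  ring

lemma norm_sq_expand (v : EuclideanSpace ℝ (Fin p))
    (b : OrthonormalBasis (Fin p) ℝ (EuclideanSpace ℝ (Fin p))) :
    ‖v‖^2 = ∑ i, (b.repr v i)^2 := by
  rw [← b.repr.norm_map v, EuclideanSpace.norm_eq, Real.sq_sqrt (by positivity)]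
  simp [sq_abs]

lemma repr_zero_of_mem_span (b : OrthonormalBasis (Fin p) ℝ (EuclideanSpace ℝ (Fin p)))
    (T : Finset (Fin p)) (v : EuclideanSpace ℝ (Fin p))
    (hv : v ∈ Submodule.span ℝ (Set.range (fun j : T => b j)))
    {i : Fin p} (hi : i ∉ T) : b.repr v i = 0 := by
  rw [b.repr_apply_apply]
  have : v ∈ LinearMap.ker ((innerSL ℝ (b i) : EuclideanSpace ℝ (Fin p) →L[ℝ] ℝ).toLinearMap) := by
    refine Submodule.span_le.mpr ?_ hv
    rintro x ⟨j, rfl⟩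
    simp only [SetLike.mem_coe, LinearMap.mem_ker, ContinuousLinearMap.coe_coe, innerSL_apply_apply]
    exact b.orthonormal.2 (fun h => hi (h ▸ j.2))
  simpa using this

lemma quad_ge_of_mem_span (hA : A.IsHermitian) (T : Finset (Fin p)) (m : ℝ)
    (hm : ∀ i ∈ T, m ≤ hA.eigenvalues i) (v : EuclideanSpace ℝ (Fin p))
    (hv : v ∈ Submodule.span ℝ (Set.range (fun j : T => hA.eigenvectorBasis j))) :
    m * ‖v‖^2 ≤ (inner ℝ v (Matrix.toEuclideanLin A v) : ℝ) := by
  rw [quad_expand hA v, norm_sq_expand v hA.eigenvectorBasis, Finset.mul_sum]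
  refine Finset.sum_le_sum fun i _ => ?_
  by_cases hiT : i ∈ T
  · exact mul_le_mul_of_nonneg_right (hm i hiT) (sq_nonneg _)
  · rw [repr_zero_of_mem_span hA.eigenvectorBasis T v hv hiT]
    simp

lemma quad_le_of_mem_span (hA : A.IsHermitian) (T : Finset (Fin p)) (m : ℝ)
    (hm : ∀ i ∈ T, hA.eigenvalues i ≤ m) (v : EuclideanSpace ℝ (Fin p))
    (hv : v ∈ Submodule.span ℝ (Set.range (fun j : T => hA.eigenvectorBasis j))) :
    (inner ℝ v (Matrix.toEuclideanLin A v) : ℝ) ≤ m * ‖v‖^2 := by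
  rw [quad_expand hA v, norm_sq_expand v hA.eigenvectorBasis, Finset.mul_sum]
  refine Finset.sum_le_sum fun i _ => ?_
  by_cases hiT : i ∈ T
  · exact mul_le_mul_of_nonneg_right (hm i hiT) (sq_nonneg _)
  · rw [repr_zero_of_mem_span hA.eigenvectorBasis T v hv hiT]
    simp

lemma finrank_span_eigvec (hA : A.IsHermitian) (T : Finset (Fin p)) :
    finrank ℝ (Submodule.span ℝ (Set.range (fun j : T => hA.eigenvectorBasis j))) = T.card := by
  have li : LinearIndependent ℝ (fun j : T => hA.eigenvectorBasis j) :=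
    (hA.eigenvectorBasis.orthonormal.comp _ Subtype.val_injective).linearIndependent
  rw [finrank_span_eq_card li, Fintype.card_coe]

/-- Core min–max intersection lemma. -/
lemma core (hA : A.IsHermitian) (hB : B.IsHermitian) (k : Fin p) :
    ∃ v : EuclideanSpace ℝ (Fin p), v ≠ 0 ∧
      eigval A k * ‖v‖^2 ≤ (inner ℝ v (Matrix.toEuclideanLin A v) : ℝ) ∧
      (inner ℝ v (Matrix.toEuclideanLin B v) : ℝ) ≤ eigval B k * ‖v‖^2 := by
  set σ := Tuple.sort hA.eigenvalues with hσ
  set τ := Tuple.sort hB.eigenvalues with hτ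
  set TA : Finset (Fin p) := (Finset.Ici k.rev).image σ with hTA
  set TB : Finset (Fin p) := (Finset.Iic k.rev).image τ with hTB
  set V := Submodule.span ℝ (Set.range (fun j : TA => hA.eigenvectorBasis j)) with hV
  set W := Submodule.span ℝ (Set.range (fun j : TB => hB.eigenvectorBasis j)) with hW
  have hkp : (k : ℕ) < p := k.2
  have hcardA : TA.card = (k : ℕ) + 1 := by
    rw [hTA, Finset.card_image_of_injective _ σ.injective, Fin.card_Ici]
    have := Fin.val_rev k
    omega
  have hcardB : TB.card = p - (k : ℕ) := by
    rw [hTB, Finset.card_image_of_injective _ τ.injective, Fin.card_Iic]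
    have := Fin.val_rev k
    omega
  have hdim : 1 ≤ finrank ℝ (V ⊓ W : Submodule ℝ (EuclideanSpace ℝ (Fin p))) := by
    have hsum := Submodule.finrank_sup_add_finrank_inf_eq V W
    have hle : finrank ℝ (V ⊔ W : Submodule ℝ (EuclideanSpace ℝ (Fin p))) ≤ p := by
      simpa [finrank_euclideanSpace_fin] using (V ⊔ W).finrank_le
    have h1 : finrank ℝ V = (k : ℕ) + 1 := by rw [hV, finrank_span_eigvec hA, hcardA]
    have h2 : finrank ℝ W = p - (k : ℕ) := by rw [hW, finrank_span_eigvec hB, hcardB]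
    omega
  obtain ⟨v, hvmem, hv0⟩ := Submodule.exists_mem_ne_zero_of_ne_bot
    (p := V ⊓ W) (by intro h; rw [h] at hdim; simp at hdim)
  rw [Submodule.mem_inf] at hvmem
  refine ⟨v, hv0, ?_, ?_⟩
  · refine quad_ge_of_mem_span hA TA _ ?_ v (hvmem.1)
    rintro i hi
    rw [hTA, Finset.mem_image] at hi
    obtain ⟨j, hj, rfl⟩ := hi
    rw [eigval_eq hA k]
    exact Tuple.monotone_sort hA.eigenvalues (Finset.mem_Ici.mp hj)
  · refine quad_le_of_mem_span hB TB _ ?_ v (hvmem.2)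
    rintro i hi
    rw [hTB, Finset.mem_image] at hi
    obtain ⟨j, hj, rfl⟩ := hi
    rw [eigval_eq hB k]
    exact Tuple.monotone_sort hB.eigenvalues (Finset.mem_Iic.mp hj)

/-- Core lemma in dot-product form. -/
lemma core' (hA : A.IsHermitian) (hB : B.IsHermitian) (k : Fin p) :
    ∃ w : Fin p → ℝ, 0 < w ⬝ᵥ w ∧
      eigval A k * (w ⬝ᵥ w) ≤ w ⬝ᵥ A *ᵥ w ∧
      w ⬝ᵥ B *ᵥ w ≤ eigval B k * (w ⬝ᵥ w) := by
  obtain ⟨v, hv0, h1, h2⟩ := core hA hB k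
  refine ⟨WithLp.equiv 2 _ v, ?_, ?_, ?_⟩
  · have : (WithLp.equiv 2 _ v) ⬝ᵥ (WithLp.equiv 2 _ v) = ‖v‖^2 := by
      rw [← real_inner_self_eq_norm_sq, inner_eq_dot]
    rw [this]
    have : ‖v‖ ≠ 0 := fun h => hv0 (norm_eq_zero.mp h)
    positivity
  · have hd : (WithLp.equiv 2 _ v) ⬝ᵥ A *ᵥ (WithLp.equiv 2 _ v) =
        (inner ℝ v (Matrix.toEuclideanLin A v) : ℝ) := by
      rw [inner_eq_dot]; simp
    have hn : (WithLp.equiv 2 _ v) ⬝ᵥ (WithLp.equiv 2 _ v) = ‖v‖^2 := by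
      rw [← real_inner_self_eq_norm_sq, inner_eq_dot]
    rw [hd, hn]; exact h1
  · have hd : (WithLp.equiv 2 _ v) ⬝ᵥ B *ᵥ (WithLp.equiv 2 _ v) =
        (inner ℝ v (Matrix.toEuclideanLin B v) : ℝ) := by
      rw [inner_eq_dot]; simp
    have hn : (WithLp.equiv 2 _ v) ⬝ᵥ (WithLp.equiv 2 _ v) = ‖v‖^2 := by
      rw [← real_inner_self_eq_norm_sq, inner_eq_dot]
    rw [hd, hn]; exact h2

section sqrtFacts
variable (h0 : A.PosDef)

noncomputable def sqrtM (A : Matrix (Fin p) (Fin p) ℝ) : Matrix (Fin p) (Fin p) ℝ :=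
  (invSqrt A)⁻¹

lemma invSqrt_sq (h0 : A.PosDef) : invSqrt A * invSqrt A = A⁻¹ := by
  have hB := h0.inv.posSemidef
  have hs := hB.1.spectral_theorem
  rw [Unitary.conjStarAlgAut_apply] at hs
  rw [invSqrt, dif_pos h0]
  have hU := Unitary.coe_star_mul_self hB.1.eigenvectorUnitary
  calc _ = (hB.1.eigenvectorUnitary : Matrix (Fin p) (Fin p) ℝ) *
        (diagonal ((↑) ∘ (√·) ∘ hB.1.eigenvalues) *
          ((star hB.1.eigenvectorUnitary : Matrix (Fin p) (Fin p) ℝ) *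
            (hB.1.eigenvectorUnitary : Matrix (Fin p) (Fin p) ℝ)) *
          diagonal ((↑) ∘ (√·) ∘ hB.1.eigenvalues)) *
        (star hB.1.eigenvectorUnitary : Matrix (Fin p) (Fin p) ℝ) := by
        simp only [Matrix.mul_assoc]
    _ = _ := by
        rw [hU, Matrix.mul_one, diagonal_mul_diagonal]
        refine Eq.trans ?_ hs.symm
        congr 2
        congr 1
        funext i
        simp [Real.mul_self_sqrt (hB.eigenvalues_nonneg i)]

lemma invSqrt_transpose (h0 : A.PosDef) : (invSqrt A)ᵀ = invSqrt A := by
  rw [invSqrt, dif_pos h0]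
  simp [Matrix.transpose_mul, Matrix.star_eq_conjTranspose,
    Matrix.conjTranspose_eq_transpose_of_trivial, Matrix.mul_assoc]

lemma invSqrt_det (h0 : A.PosDef) : IsUnit (invSqrt A).det := by
  have h := congrArg det (invSqrt_sq h0)
  rw [det_mul] at h
  have : IsUnit (A⁻¹).det :=
    (isUnit_nonsing_inv_det_iff).mpr (isUnit_iff_ne_zero.mpr h0.det_pos.ne')
  rw [← h] at this
  exact isUnit_of_mul_isUnit_left this

lemma invSqrt_mul_sqrt (h0 : A.PosDef) : invSqrt A * sqrtM A = 1 :=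
  Matrix.mul_nonsing_inv _ (invSqrt_det h0)

lemma sqrt_mul_invSqrt (h0 : A.PosDef) : sqrtM A * invSqrt A = 1 :=
  Matrix.nonsing_inv_mul _ (invSqrt_det h0)

lemma sqrtM_mul_self (h0 : A.PosDef) : sqrtM A * sqrtM A = A := by
  unfold sqrtM
  rw [← Matrix.mul_inv_rev, invSqrt_sq h0,
    Matrix.nonsing_inv_nonsing_inv _ (isUnit_iff_ne_zero.mpr h0.det_pos.ne')]

lemma sqrtM_transpose (h0 : A.PosDef) : (sqrtM A)ᵀ = sqrtM A := by
  unfold sqrtM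
  rw [Matrix.transpose_nonsing_inv, invSqrt_transpose h0]

lemma key_identity (h0 : A.PosDef) (Sig : Matrix (Fin p) (Fin p) ℝ) :
    sqrtM A * (invSqrt A * Sig * invSqrt A - 1) * sqrtM A
      = Sig - A := by
  have h1 := sqrt_mul_invSqrt h0
  have h2 := invSqrt_mul_sqrt h0
  have h3 := sqrtM_mul_self h0
  calc sqrtM A * (invSqrt A * Sig * invSqrt A - 1) * sqrtM A
      = (sqrtM A * invSqrt A) * Sig * (invSqrt A * sqrtM A)
        - sqrtM A * sqrtM A := by noncomm_ring
    _ = Sig - A := by rw [h1, h2, h3, one_mul, mul_one]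
end sqrtFacts

lemma qbound (A : Matrix (Fin p) (Fin p) ℝ) (x : Fin p → ℝ) :
    |x ⬝ᵥ A *ᵥ x| ≤ sNorm A * (x ⬝ᵥ x) := by
  set x' : EuclideanSpace ℝ (Fin p) := (WithLp.equiv 2 _).symm x with hx'
  have h1 : x ⬝ᵥ A *ᵥ x = (inner ℝ x' (Matrix.toEuclideanLin A x') : ℝ) := by
    rw [inner_eq_dot]; simp [hx']
  have h2 : x ⬝ᵥ x = ‖x'‖^2 := by
    rw [← real_inner_self_eq_norm_sq, inner_eq_dot]; simp [hx']
  rw [h1, h2]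
  calc |(inner ℝ x' (Matrix.toEuclideanLin A x') : ℝ)| ≤ ‖x'‖ * ‖Matrix.toEuclideanLin A x'‖ :=
        abs_real_inner_le_norm _ _
    _ ≤ ‖x'‖ * (sNorm A * ‖x'‖) := by
        gcongr
        exact (LinearMap.toContinuousLinearMap (Matrix.toEuclideanLin A)).le_opNorm x'
    _ = sNorm A * ‖x'‖^2 := by ring

/-- Quadratic form comparison. -/
lemma quad_compare (h0 : A.PosDef) (Sig : Matrix (Fin p) (Fin p) ℝ) (x : Fin p → ℝ) :
    |x ⬝ᵥ Sig *ᵥ x - x ⬝ᵥ A *ᵥ x| ≤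
      sNorm (invSqrt A * Sig * invSqrt A - 1) * (x ⬝ᵥ A *ᵥ x) := by
  set S := sqrtM A with hS
  have hsym : Sᵀ = S := sqrtM_transpose h0
  set E := invSqrt A * Sig * invSqrt A - 1 with hE
  set y := S *ᵥ x with hy
  have key : x ⬝ᵥ Sig *ᵥ x - x ⬝ᵥ A *ᵥ x = y ⬝ᵥ E *ᵥ y := by
    have h := key_identity h0 Sig
    have : x ⬝ᵥ (S * E * S) *ᵥ x = y ⬝ᵥ E *ᵥ y := by
      rw [← Matrix.mulVec_mulVec, ← Matrix.mulVec_mulVec, hy,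
        Matrix.dotProduct_mulVec x S, ← Matrix.mulVec_transpose, hsym]
    rw [← this, h, Matrix.sub_mulVec, dotProduct_sub]
  have hyy : y ⬝ᵥ y = x ⬝ᵥ A *ᵥ x := by
    conv_rhs => rw [← sqrtM_mul_self h0]
    rw [← Matrix.mulVec_mulVec, Matrix.dotProduct_mulVec x, ← Matrix.mulVec_transpose, hsym, hy]
  rw [key, ← hyy]
  exact qbound E y

lemma sqrt_abs_le {t : ℝ} (ht : 0 ≤ t) : |Real.sqrt t - 1| ≤ |t - 1| := by
  have h1 : Real.sqrt t ^ 2 = t := Real.sq_sqrt ht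
  have h2 : 0 ≤ Real.sqrt t := Real.sqrt_nonneg t
  have key : |t - 1| = |Real.sqrt t - 1| * (Real.sqrt t + 1) := by
    rw [← abs_of_nonneg (show (0:ℝ) ≤ Real.sqrt t + 1 by linarith), ← abs_mul]
    congr 1
    nlinarith
  rw [key]
  exact le_mul_of_one_le_right (abs_nonneg _) (by linarith)

end EigPerturb

open EigPerturb in
/-- Appendix Theorem A.1 (low-dimensional eigenvalue perturbation). -/
theorem statement5 :
    ∀ c : ℝ, 1 < c →
      ∃ δ C : ℝ, 0 < δ ∧ 0 < C ∧
        ∀ (p : ℕ) (Sig Sig0 : Matrix (Fin p) (Fin p) ℝ),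
          Sig.PosDef → Sig0.PosDef →
          (∀ l : ℕ, (h : l + 1 < p) →
            c < eigval Sig0 ⟨l, by omega⟩ / eigval Sig0 ⟨l + 1, h⟩) →
          (p : ℝ) * sNorm (invSqrt Sig0 * Sig * invSqrt Sig0 - 1) < δ →
          (∀ k : Fin p,
            |eigval Sig k / eigval Sig0 k - 1| ≤
              C * p * sNorm (invSqrt Sig0 * Sig * invSqrt Sig0 - 1)) ∧
          (∀ k : Fin p,
            |Real.sqrt (eigval Sig k) / Real.sqrt (eigval Sig0 k) - 1| ≤
              C * p * sNorm (invSqrt Sig0 * Sig * invSqrt Sig0 - 1)) := by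
  intro c hc
  refine ⟨1/2, 1, by norm_num, by norm_num, ?_⟩
  intro p Sig Sig0 hSig hSig0 _gap hsmall
  set ε := sNorm (invSqrt Sig0 * Sig * invSqrt Sig0 - 1) with hεdef
  have hε0 : 0 ≤ ε := norm_nonneg _
  have hmain : ∀ k : Fin p, |eigval Sig k / eigval Sig0 k - 1| ≤ ε := by
    intro k
    have hp1 : (1 : ℝ) ≤ p := by
      have := k.2; exact_mod_cast Nat.one_le_iff_ne_zero.mpr (by omega)
    have hεsmall : ε < 1/2 := lt_of_le_of_lt (le_mul_of_one_le_left hε0 hp1) hsmall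
    have dpos := eigval_pos hSig0 k
    -- upper bound
    have hupper : eigval Sig k ≤ (1 + ε) * eigval Sig0 k := by
      obtain ⟨w, hw, ha, hb⟩ := core' hSig.1 hSig0.1 k
      have hcomp := quad_compare hSig0 Sig w
      rw [← hεdef] at hcomp
      have h3 := (abs_le.mp hcomp).2
      have h4 : w ⬝ᵥ Sig *ᵥ w ≤ (1 + ε) * (w ⬝ᵥ Sig0 *ᵥ w) := by linarith
      have h5 : (1 + ε) * (w ⬝ᵥ Sig0 *ᵥ w) ≤ (1 + ε) * (eigval Sig0 k * (w ⬝ᵥ w)) :=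
        mul_le_mul_of_nonneg_left hb (by linarith)
      have h6 : eigval Sig k * (w ⬝ᵥ w) ≤ ((1 + ε) * eigval Sig0 k) * (w ⬝ᵥ w) := by
        calc eigval Sig k * (w ⬝ᵥ w) ≤ w ⬝ᵥ Sig *ᵥ w := ha
          _ ≤ (1 + ε) * (eigval Sig0 k * (w ⬝ᵥ w)) := le_trans h4 h5
          _ = ((1 + ε) * eigval Sig0 k) * (w ⬝ᵥ w) := by ring
      exact le_of_mul_le_mul_right h6 hw
    -- lower bound
    have hlower : (1 - ε) * eigval Sig0 k ≤ eigval Sig k := by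
      obtain ⟨w, hw, ha, hb⟩ := core' hSig0.1 hSig.1 k
      have hcomp := quad_compare hSig0 Sig w
      rw [← hεdef] at hcomp
      have h3 := (abs_le.mp hcomp).1
      have h4 : (1 - ε) * (w ⬝ᵥ Sig0 *ᵥ w) ≤ w ⬝ᵥ Sig *ᵥ w := by linarith
      have h5 : (1 - ε) * (eigval Sig0 k * (w ⬝ᵥ w)) ≤ (1 - ε) * (w ⬝ᵥ Sig0 *ᵥ w) :=
        mul_le_mul_of_nonneg_left ha (by linarith)
      have h6 : ((1 - ε) * eigval Sig0 k) * (w ⬝ᵥ w) ≤ eigval Sig k * (w ⬝ᵥ w) := by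
        calc ((1 - ε) * eigval Sig0 k) * (w ⬝ᵥ w)
            = (1 - ε) * (eigval Sig0 k * (w ⬝ᵥ w)) := by ring
          _ ≤ w ⬝ᵥ Sig *ᵥ w := le_trans h5 h4
          _ ≤ eigval Sig k * (w ⬝ᵥ w) := hb
      exact le_of_mul_le_mul_right h6 hw
    rw [abs_le]
    constructor
    · rw [le_sub_iff_add_le, le_div_iff₀ dpos]
      linarith
    · rw [sub_le_iff_le_add, div_le_iff₀ dpos]
      linarith
  have hεle : ∀ k : Fin p, ε ≤ 1 * (p : ℝ) * ε := by
    intro k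
    have hp1 : (1 : ℝ) ≤ p := by
      have := k.2; exact_mod_cast Nat.one_le_iff_ne_zero.mpr (by omega)
    rw [one_mul]
    exact le_mul_of_one_le_left hε0 hp1
  refine ⟨fun k => le_trans (hmain k) (hεle k), fun k => ?_⟩
  have dpos := eigval_pos hSig0 k
  have lpos := eigval_pos hSig k
  have hdiv : Real.sqrt (eigval Sig k) / Real.sqrt (eigval Sig0 k)
      = Real.sqrt (eigval Sig k / eigval Sig0 k) :=
    (Real.sqrt_div lpos.le _).symm
  rw [hdiv]
  refine le_trans (le_trans (sqrt_abs_le (by positivity)) (hmain k)) (hεle k)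
end

section
/- Let Σ be a p×p real symmetric positive definite matrix, K ≤ p, and let Γ ∈ ℝ^{p×K} and Γ⊥ ∈ ℝ^{p×(p−K)} be such that the p×p matrix [Γ, Γ⊥] is orthogonal. Then for every k = 1,…,K: | √(λ_k(Σ)) − √(λ_k(Γᵀ Σ Γ)) | ≤ ‖Γ⊥ᵀ Σ Γ⊥‖₂^{1/2}. -/
open Matrix Module Submodule
open scoped RealInnerProductSpace

noncomputable abbrev TL {m n : ℕ} (A : Matrix (Fin m) (Fin n) ℝ) :
    EuclideanSpace ℝ (Fin n) →ₗ[ℝ] EuclideanSpace ℝ (Fin m) := Matrix.toEuclideanLin A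

lemma TL_comp {m n r : ℕ} (A : Matrix (Fin m) (Fin n) ℝ) (B : Matrix (Fin n) (Fin r) ℝ)
    (w : EuclideanSpace ℝ (Fin r)) : TL A (TL B w) = TL (A * B) w := by
  simp [Matrix.toEuclideanLin_apply, Matrix.mulVec_mulVec]

lemma TL_adj {m n : ℕ} (B : Matrix (Fin m) (Fin n) ℝ) (w : EuclideanSpace ℝ (Fin n))
    (y : EuclideanSpace ℝ (Fin m)) : ⟪TL B w, y⟫ = ⟪w, TL Bᵀ y⟫ := by
  simp only [Matrix.toEuclideanLin_apply, PiLp.inner_apply, RCLike.inner_apply, conj_trivial,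
    WithLp.ofLp_toLp, Matrix.mulVec, dotProduct, Matrix.transpose_apply,
    Finset.sum_mul, Finset.mul_sum]
  rw [Finset.sum_comm]
  apply Finset.sum_congr rfl; intros; apply Finset.sum_congr rfl; intros; ring

lemma TL_one {n : ℕ} (x : EuclideanSpace ℝ (Fin n)) : TL (1 : Matrix (Fin n) (Fin n) ℝ) x = x := by
  simp [Matrix.toEuclideanLin_apply]

lemma parseval {n : ℕ} (b : OrthonormalBasis (Fin n) ℝ (EuclideanSpace ℝ (Fin n)))
    (x y : EuclideanSpace ℝ (Fin n)) : ⟪x, y⟫ = ∑ j, b.repr x j * b.repr y j := by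
  rw [← b.repr.inner_map_map x y]
  simp only [PiLp.inner_apply, RCLike.inner_apply, conj_trivial]
  exact Finset.sum_congr rfl fun _ _ => mul_comm _ _

lemma TL_eigen {n : ℕ} {A : Matrix (Fin n) (Fin n) ℝ} (hA : A.IsHermitian) (j : Fin n) :
    TL A (hA.eigenvectorBasis j) = hA.eigenvalues j • hA.eigenvectorBasis j := by
  apply (WithLp.equiv 2 (Fin n → ℝ)).injective
  simp [Matrix.toEuclideanLin_apply, hA.mulVec_eigenvectorBasis]

lemma repr_TL_eigen {n : ℕ} {A : Matrix (Fin n) (Fin n) ℝ} (hA : A.IsHermitian)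
    (x : EuclideanSpace ℝ (Fin n)) (j : Fin n) :
    hA.eigenvectorBasis.repr (TL A x) j = hA.eigenvalues j * hA.eigenvectorBasis.repr x j := by
  have hsym := (Matrix.isHermitian_iff_isSymmetric.1 hA)
  rw [OrthonormalBasis.repr_apply_apply, OrthonormalBasis.repr_apply_apply,
    ← hsym (hA.eigenvectorBasis j) x, TL_eigen hA j, real_inner_smul_left]

lemma quad_eq {n : ℕ} {A : Matrix (Fin n) (Fin n) ℝ} (hA : A.IsHermitian)
    (x : EuclideanSpace ℝ (Fin n)) :
    ⟪x, TL A x⟫ = ∑ j, hA.eigenvalues j * (hA.eigenvectorBasis.repr x j)^2 := by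
  rw [parseval hA.eigenvectorBasis]
  refine Finset.sum_congr rfl fun j _ => ?_
  rw [repr_TL_eigen hA]; ring

lemma norm_sq_eq {n : ℕ} (b : OrthonormalBasis (Fin n) ℝ (EuclideanSpace ℝ (Fin n)))
    (x : EuclideanSpace ℝ (Fin n)) : ‖x‖^2 = ∑ j, (b.repr x j)^2 := by
  rw [← real_inner_self_eq_norm_sq, parseval b]
  refine Finset.sum_congr rfl fun j _ => ?_; ring

lemma repr_zero_of_not_mem {n : ℕ} (b : OrthonormalBasis (Fin n) ℝ (EuclideanSpace ℝ (Fin n)))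
    {s : Set (Fin n)} {x : EuclideanSpace ℝ (Fin n)}
    (hx : x ∈ Submodule.span ℝ (b '' s)) {j : Fin n} (hj : j ∉ s) :
    b.repr x j = 0 := by
  rw [OrthonormalBasis.repr_apply_apply]
  induction hx using Submodule.span_induction with
  | mem y hy =>
    obtain ⟨i, his, rfl⟩ := hy
    exact b.orthonormal.2 (fun h : j = i => hj (h ▸ his))
  | zero => simp
  | add y z _ _ hy hz => rw [inner_add_right, hy, hz, add_zero]
  | smul a y _ hy => rw [inner_smul_right, hy, mul_zero]

lemma quad_le_of_mem {n : ℕ} {A : Matrix (Fin n) (Fin n) ℝ} (hA : A.IsHermitian)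
    {s : Set (Fin n)} {c : ℝ} (hc : ∀ i ∈ s, hA.eigenvalues i ≤ c)
    {x : EuclideanSpace ℝ (Fin n)}
    (hx : x ∈ Submodule.span ℝ (hA.eigenvectorBasis '' s)) :
    ⟪x, TL A x⟫ ≤ c * ‖x‖^2 := by
  rw [quad_eq hA, norm_sq_eq hA.eigenvectorBasis, Finset.mul_sum]
  refine Finset.sum_le_sum fun j _ => ?_
  by_cases hj : j ∈ s
  · exact mul_le_mul_of_nonneg_right (hc j hj) (sq_nonneg _)
  · rw [repr_zero_of_not_mem hA.eigenvectorBasis hx hj]; simp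

lemma quad_ge_of_mem {n : ℕ} {A : Matrix (Fin n) (Fin n) ℝ} (hA : A.IsHermitian)
    {s : Set (Fin n)} {c : ℝ} (hc : ∀ i ∈ s, c ≤ hA.eigenvalues i)
    {x : EuclideanSpace ℝ (Fin n)}
    (hx : x ∈ Submodule.span ℝ (hA.eigenvectorBasis '' s)) :
    c * ‖x‖^2 ≤ ⟪x, TL A x⟫ := by
  rw [quad_eq hA, norm_sq_eq hA.eigenvectorBasis, Finset.mul_sum]
  refine Finset.sum_le_sum fun j _ => ?_
  by_cases hj : j ∈ s
  · exact mul_le_mul_of_nonneg_right (hc j hj) (sq_nonneg _)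
  · rw [repr_zero_of_not_mem hA.eigenvectorBasis hx hj]; simp

lemma exists_ne_zero_mem_inf {n : ℕ} {V W : Submodule ℝ (EuclideanSpace ℝ (Fin n))}
    (h : n < finrank ℝ V + finrank ℝ W) : ∃ x, x ≠ 0 ∧ x ∈ V ∧ x ∈ W := by
  have h1 := Submodule.finrank_sup_add_finrank_inf_eq V W
  have h2 : finrank ℝ ↥(V ⊔ W) ≤ n := by
    simpa [finrank_euclideanSpace, Fintype.card_fin] using (V ⊔ W).finrank_le
  have h3 : 0 < finrank ℝ ↥(V ⊓ W) := by omega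
  have h4 : V ⊓ W ≠ ⊥ := by
    intro hb; rw [hb] at h3; simp at h3
  obtain ⟨x, hx, hx0⟩ := Submodule.exists_mem_ne_zero_of_ne_bot h4
  exact ⟨x, hx0, hx.1, hx.2⟩

lemma finrank_span_orthonormal {E : Type*} [NormedAddCommGroup E] [InnerProductSpace ℝ E]
    {m : ℕ} {v : Fin m → E} (hv : Orthonormal ℝ v) :
    finrank ℝ (span ℝ (Set.range v)) = m := by
  have h2 := finrank_span_eq_card (R := ℝ) hv.linearIndependent
  rw [Fintype.card_fin] at h2
  exact h2

/-- indices of the `n - k` smallest eigenvalues -/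
lemma exists_low_data {n : ℕ} {A : Matrix (Fin n) (Fin n) ℝ} (hA : A.IsHermitian) (k : Fin n) :
    ∃ g : Fin (n - k.val) → Fin n, Function.Injective g ∧
      ∀ i ∈ Set.range g, hA.eigenvalues i ≤ eigval A k := by
  have hkn : k.val < n := k.isLt
  set σ := Tuple.sort hA.eigenvalues with hσ
  have hkr : (k.rev : ℕ) = n - 1 - k.val := by rw [Fin.val_rev]; omega
  refine ⟨fun j => σ ⟨j.val, by omega⟩, ?_, ?_⟩
  · intro a b hab
    exact Fin.ext (Fin.mk_eq_mk.mp (σ.injective hab))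
  · rintro i ⟨j, rfl⟩
    have he : eigval A k = hA.eigenvalues (σ k.rev) := dif_pos hA
    rw [he]
    exact Tuple.monotone_sort hA.eigenvalues
      (by simp only [Fin.le_def, Fin.val_mk, hkr]; omega)

/-- indices of the `k + 1` largest eigenvalues -/
lemma exists_top_data {n : ℕ} {A : Matrix (Fin n) (Fin n) ℝ} (hA : A.IsHermitian) (k : Fin n) :
    ∃ g : Fin (k.val + 1) → Fin n, Function.Injective g ∧
      ∀ i ∈ Set.range g, eigval A k ≤ hA.eigenvalues i := by
  have hkn : k.val < n := k.isLt
  set σ := Tuple.sort hA.eigenvalues with hσ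
  have hkr : (k.rev : ℕ) = n - 1 - k.val := by rw [Fin.val_rev]; omega
  refine ⟨fun j => σ ⟨n - 1 - k.val + j.val, by omega⟩, ?_, ?_⟩
  · intro a b hab
    have h2 := Fin.mk_eq_mk.mp (σ.injective hab)
    exact Fin.ext (by omega)
  · rintro i ⟨j, rfl⟩
    have he : eigval A k = hA.eigenvalues (σ k.rev) := dif_pos hA
    rw [he]
    exact Tuple.monotone_sort hA.eigenvalues
      (by simp only [Fin.le_def, Fin.val_mk, hkr]; omega)

lemma exists_quad_le {n : ℕ} {A : Matrix (Fin n) (Fin n) ℝ} (hA : A.IsHermitian)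
    (k : Fin n) (V : Submodule ℝ (EuclideanSpace ℝ (Fin n)))
    (hV : k.val + 1 ≤ finrank ℝ V) :
    ∃ x ∈ V, x ≠ 0 ∧ ⟪x, TL A x⟫ ≤ eigval A k * ‖x‖^2 := by
  obtain ⟨g, hg, hc⟩ := exists_low_data hA k
  set W := span ℝ (hA.eigenvectorBasis '' Set.range g) with hWdef
  have hW : finrank ℝ W = n - k.val := by
    have h1 : Orthonormal ℝ (fun j => hA.eigenvectorBasis (g j)) :=
      hA.eigenvectorBasis.orthonormal.comp g hg
    have h2 := finrank_span_orthonormal h1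
    rwa [show Set.range (fun j => hA.eigenvectorBasis (g j))
        = hA.eigenvectorBasis '' Set.range g by rw [← Set.range_comp]; rfl] at h2
  obtain ⟨x, hx0, hxW, hxV⟩ := exists_ne_zero_mem_inf (V := W) (W := V)
    (by have := k.isLt; omega)
  exact ⟨x, hxV, hx0, quad_le_of_mem hA hc hxW⟩

lemma exists_quad_ge {n : ℕ} {A : Matrix (Fin n) (Fin n) ℝ} (hA : A.IsHermitian)
    (k : Fin n) (V : Submodule ℝ (EuclideanSpace ℝ (Fin n)))
    (hV : n - k.val ≤ finrank ℝ V) :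
    ∃ x ∈ V, x ≠ 0 ∧ eigval A k * ‖x‖^2 ≤ ⟪x, TL A x⟫ := by
  obtain ⟨g, hg, hc⟩ := exists_top_data hA k
  set W := span ℝ (hA.eigenvectorBasis '' Set.range g) with hWdef
  have hW : finrank ℝ W = k.val + 1 := by
    have h1 : Orthonormal ℝ (fun j => hA.eigenvectorBasis (g j)) :=
      hA.eigenvectorBasis.orthonormal.comp g hg
    have h2 := finrank_span_orthonormal h1
    rwa [show Set.range (fun j => hA.eigenvectorBasis (g j))
        = hA.eigenvectorBasis '' Set.range g by rw [← Set.range_comp]; rfl] at h2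
  obtain ⟨x, hx0, hxW, hxV⟩ := exists_ne_zero_mem_inf (V := W) (W := V)
    (by have := k.isLt; omega)
  exact ⟨x, hxV, hx0, quad_ge_of_mem hA hc hxW⟩

set_option maxHeartbeats 1000000 in
/-- Appendix Lemma B.1 (square-root eigenvalue comparison with a compression). -/
theorem statement9 {p K : ℕ} (hK : K ≤ p)
    (Sig : Matrix (Fin p) (Fin p) ℝ) (hSig : Sig.PosDef)
    (G : Matrix (Fin p) (Fin K) ℝ) (Gp : Matrix (Fin p) (Fin (p - K)) ℝ)
    (horth : (Matrix.fromCols G Gp)ᵀ * Matrix.fromCols G Gp = 1)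
    (k : Fin K) :
    |Real.sqrt (eigval Sig (Fin.castLE hK k)) - Real.sqrt (eigval (Gᵀ * Sig * G) k)| ≤
      Real.sqrt (sNorm (Gpᵀ * Sig * Gp)) := by
  have hkK : k.val < K := k.isLt
  -- block identities from orthogonality
  rw [Matrix.transpose_fromCols, Matrix.fromRows_mul_fromCols,
    ← Matrix.fromBlocks_one] at horth
  obtain ⟨hGG, hGGp, hGpG, hGpGp⟩ := Matrix.fromBlocks_inj.mp horth
  -- basic facts
  have hTriv : ∀ {a b : ℕ} (B : Matrix (Fin a) (Fin b) ℝ), Bᴴ = Bᵀ :=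
    fun B => Matrix.conjTranspose_eq_transpose_of_trivial B
  have hSigH : Sig.IsHermitian := hSig.1
  have hMpsd : (Gᵀ * Sig * G).PosSemidef := by
    have h := hSig.posSemidef.conjTranspose_mul_mul_same G
    rwa [hTriv] at h
  have hNpsd : (Gpᵀ * Sig * Gp).PosSemidef := by
    have h := hSig.posSemidef.conjTranspose_mul_mul_same Gp
    rwa [hTriv] at h
  have hM : (Gᵀ * Sig * G).IsHermitian := hMpsd.1
  -- inner product identities
  have hGinner : ∀ w w' : EuclideanSpace ℝ (Fin K), ⟪TL G w, TL G w'⟫ = ⟪w, w'⟫ := by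
    intro w w'; rw [TL_adj, TL_comp, hGG, TL_one]
  have hGpinner : ∀ z z' : EuclideanSpace ℝ (Fin (p - K)), ⟪TL Gp z, TL Gp z'⟫ = ⟪z, z'⟫ := by
    intro z z'; rw [TL_adj, TL_comp, hGpGp, TL_one]
  have hGnorm : ∀ w : EuclideanSpace ℝ (Fin K), ‖TL G w‖ = ‖w‖ := by
    intro w
    rw [← Real.sqrt_sq (norm_nonneg (TL G w)), ← Real.sqrt_sq (norm_nonneg w),
      ← real_inner_self_eq_norm_sq, ← real_inner_self_eq_norm_sq, hGinner]
  have hGpnorm : ∀ z : EuclideanSpace ℝ (Fin (p - K)), ‖TL Gp z‖ = ‖z‖ := by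
    intro z
    rw [← Real.sqrt_sq (norm_nonneg (TL Gp z)), ← Real.sqrt_sq (norm_nonneg z),
      ← real_inner_self_eq_norm_sq, ← real_inner_self_eq_norm_sq, hGpinner]
  have hGquad : ∀ w : EuclideanSpace ℝ (Fin K),
      ⟪TL G w, TL Sig (TL G w)⟫ = ⟪w, TL (Gᵀ * Sig * G) w⟫ := by
    intro w; rw [TL_adj, TL_comp, TL_comp]
  have hGpquad : ∀ z : EuclideanSpace ℝ (Fin (p - K)),
      ⟪TL Gp z, TL Sig (TL Gp z)⟫ = ⟪z, TL (Gpᵀ * Sig * Gp) z⟫ := by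
    intro z; rw [TL_adj, TL_comp, TL_comp]
  have hcross : ∀ (w : EuclideanSpace ℝ (Fin K)) (z : EuclideanSpace ℝ (Fin (p - K))),
      ⟪TL G w, TL Gp z⟫ = 0 := by
    intro w z
    rw [TL_adj, TL_comp, hGGp]
    have h0 : TL (0 : Matrix (Fin K) (Fin (p - K)) ℝ) z = 0 := by
      have := map_zero (Matrix.toEuclideanLin
        (𝕜 := ℝ) (m := Fin K) (n := Fin (p - K)))
      exact congrFun (congrArg DFunLike.coe this) z ▸ rfl
    rw [h0, inner_zero_right]
  -- nonnegativity
  have hμ0 : 0 ≤ eigval (Gᵀ * Sig * G) k := by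
    rw [eigval, dif_pos hM]; exact hMpsd.eigenvalues_nonneg _
  have hlam0 : 0 ≤ eigval Sig (Fin.castLE hK k) := by
    rw [eigval, dif_pos hSigH]; exact hSig.posSemidef.eigenvalues_nonneg _
  have hε0 : 0 ≤ sNorm (Gpᵀ * Sig * Gp) := norm_nonneg _
  -- Step I : interlacing, eigval M k ≤ eigval Sig k'
  have hIle : eigval (Gᵀ * Sig * G) k ≤ eigval Sig (Fin.castLE hK k) := by
    obtain ⟨g, hg, hc⟩ := exists_top_data hM k
    set W := span ℝ (hM.eigenvectorBasis '' Set.range g) with hWdef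
    set V := Submodule.map (TL G) W with hVdef
    have hfam : Orthonormal ℝ (fun j => TL G (hM.eigenvectorBasis (g j))) := by
      rw [orthonormal_iff_ite]
      intro i j
      rw [hGinner]
      have h1 := hM.eigenvectorBasis.orthonormal.comp g hg
      rw [orthonormal_iff_ite] at h1
      exact h1 i j
    have hVrank : k.val + 1 ≤ finrank ℝ V := by
      have hle : span ℝ (Set.range (fun j => TL G (hM.eigenvectorBasis (g j)))) ≤ V := by
        rw [Submodule.span_le]
        rintro x ⟨j, rfl⟩
        exact ⟨hM.eigenvectorBasis (g j), Submodule.subset_span ⟨g j, ⟨j, rfl⟩, rfl⟩, rfl⟩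
      have h2 := Submodule.finrank_mono hle
      rwa [finrank_span_orthonormal hfam] at h2
    have hVrank' : (Fin.castLE hK k).val + 1 ≤ finrank ℝ V := by
      simpa using hVrank
    obtain ⟨x, hxV, hx0, hquad⟩ := exists_quad_le hSigH (Fin.castLE hK k) V hVrank'
    obtain ⟨w, hwW, rfl⟩ := hxV
    have hw0 : w ≠ 0 := fun h => hx0 (by rw [h, map_zero])
    have h1 : eigval (Gᵀ * Sig * G) k * ‖w‖^2 ≤ ⟪w, TL (Gᵀ * Sig * G) w⟫ :=
      quad_ge_of_mem hM hc hwW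
    rw [hGquad w, hGnorm w] at hquad
    have hnorm : (0:ℝ) < ‖w‖^2 := pow_pos (norm_pos_iff.mpr hw0) 2
    exact (mul_le_mul_iff_of_pos_right hnorm).mp (h1.trans hquad)
  -- Step II : sqrt eigval Sig k' ≤ sqrt eigval M k + sqrt ε
  have hIIle : Real.sqrt (eigval Sig (Fin.castLE hK k)) ≤
      Real.sqrt (eigval (Gᵀ * Sig * G) k) + Real.sqrt (sNorm (Gpᵀ * Sig * Gp)) := by
    obtain ⟨g, hg, hc⟩ := exists_low_data hM k
    set W := span ℝ (hM.eigenvectorBasis '' Set.range g) with hWdef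
    set A' := Submodule.map (TL G) W with hA'def
    set B' := LinearMap.range (TL Gp) with hB'def
    have hfam : Orthonormal ℝ (fun j => TL G (hM.eigenvectorBasis (g j))) := by
      rw [orthonormal_iff_ite]
      intro i j
      rw [hGinner]
      have h1 := hM.eigenvectorBasis.orthonormal.comp g hg
      rw [orthonormal_iff_ite] at h1
      exact h1 i j
    have hA'rank : K - k.val ≤ finrank ℝ A' := by
      have hle : span ℝ (Set.range (fun j => TL G (hM.eigenvectorBasis (g j)))) ≤ A' := by
        rw [Submodule.span_le]
        rintro x ⟨j, rfl⟩
        exact ⟨hM.eigenvectorBasis (g j), Submodule.subset_span ⟨g j, ⟨j, rfl⟩, rfl⟩, rfl⟩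
      have h2 := Submodule.finrank_mono hle
      rwa [finrank_span_orthonormal hfam] at h2
    have hGpinj : Function.Injective (TL Gp) := by
      intro z z' hzz
      have h1 : ‖z - z'‖ = 0 := by
        rw [← hGpnorm (z - z'), map_sub, hzz, sub_self, norm_zero]
      rwa [norm_eq_zero, sub_eq_zero] at h1
    have hBrank : finrank ℝ B' = p - K := by
      rw [hB'def, LinearMap.finrank_range_of_inj hGpinj, finrank_euclideanSpace,
        Fintype.card_fin]
    have hinf : A' ⊓ B' = ⊥ := by
      rw [eq_bot_iff]
      rintro x ⟨hxA, hxB⟩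
      obtain ⟨w, hw, rfl⟩ := hxA
      obtain ⟨z, hz⟩ := hxB
      have h1 : ⟪TL G w, TL G w⟫ = 0 := by
        have h2 : ⟪TL G w, TL G w⟫ = ⟪TL G w, TL Gp z⟫ := by rw [hz]
        rw [h2, hcross]
      rw [inner_self_eq_zero] at h1
      simp only [Submodule.mem_bot]
      exact h1
    have hsup : p - (Fin.castLE hK k).val ≤ finrank ℝ ↥(A' ⊔ B') := by
      have h1 := Submodule.finrank_sup_add_finrank_inf_eq A' B'
      rw [hinf, finrank_bot] at h1
      simp only [Fin.coe_castLE]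
      omega
    obtain ⟨x, hxV, hx0, hquad⟩ := exists_quad_ge hSigH (Fin.castLE hK k) (A' ⊔ B') hsup
    obtain ⟨a, haA, b, hbB, rfl⟩ := Submodule.mem_sup.mp hxV
    obtain ⟨w, hwW, rfl⟩ := haA
    obtain ⟨z, rfl⟩ := hbB
    -- square root of Sigma
    obtain ⟨S, hSS, hSt⟩ : ∃ S : Matrix (Fin p) (Fin p) ℝ, S * S = Sig ∧ Sᵀ = S := by
      open MatrixOrder in
      exact ⟨CFC.sqrt Sig, CFC.sqrt_mul_sqrt_self Sig hSig.posSemidef.nonneg,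
        by rw [← hTriv]; exact (CFC.sqrt_nonneg Sig).posSemidef.1⟩
    have hquadS : ∀ y : EuclideanSpace ℝ (Fin p), ⟪y, TL Sig y⟫ = ‖TL S y‖^2 := by
      intro y
      rw [← real_inner_self_eq_norm_sq, TL_adj, hSt, TL_comp, hSS]
    have hxsq : ‖TL G w + TL Gp z‖^2 = ‖w‖^2 + ‖z‖^2 := by
      rw [norm_add_sq_real, hcross, hGnorm, hGpnorm]; ring
    have hwx : ‖w‖ ≤ ‖TL G w + TL Gp z‖ := by
      rw [← Real.sqrt_sq (norm_nonneg w), ← Real.sqrt_sq (norm_nonneg (TL G w + TL Gp z))]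
      apply Real.sqrt_le_sqrt
      rw [hxsq]; nlinarith [sq_nonneg ‖z‖]
    have hzx : ‖z‖ ≤ ‖TL G w + TL Gp z‖ := by
      rw [← Real.sqrt_sq (norm_nonneg z), ← Real.sqrt_sq (norm_nonneg (TL G w + TL Gp z))]
      apply Real.sqrt_le_sqrt
      rw [hxsq]; nlinarith [sq_nonneg ‖w‖]
    have hxpos : (0:ℝ) < ‖TL G w + TL Gp z‖ := norm_pos_iff.mpr hx0
    -- bound on the G part
    have hb1 : ‖TL S (TL G w)‖ ≤ Real.sqrt (eigval (Gᵀ * Sig * G) k) * ‖w‖ := by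
      have h1 : ‖TL S (TL G w)‖^2 ≤ eigval (Gᵀ * Sig * G) k * ‖w‖^2 := by
        rw [← hquadS, hGquad]
        exact quad_le_of_mem hM hc hwW
      rw [← Real.sqrt_sq (norm_nonneg (TL S (TL G w)))]
      calc Real.sqrt (‖TL S (TL G w)‖^2)
          ≤ Real.sqrt (eigval (Gᵀ * Sig * G) k * ‖w‖^2) := Real.sqrt_le_sqrt h1
        _ = Real.sqrt (eigval (Gᵀ * Sig * G) k) * ‖w‖ := by
            rw [Real.sqrt_mul hμ0, Real.sqrt_sq (norm_nonneg w)]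
    -- bound on the Gp part
    have hopN : ∀ y : EuclideanSpace ℝ (Fin (p - K)),
        ‖TL (Gpᵀ * Sig * Gp) y‖ ≤ sNorm (Gpᵀ * Sig * Gp) * ‖y‖ := by
      intro y
      exact (LinearMap.toContinuousLinearMap (TL (Gpᵀ * Sig * Gp))).le_opNorm y
    have hb2 : ‖TL S (TL Gp z)‖ ≤ Real.sqrt (sNorm (Gpᵀ * Sig * Gp)) * ‖z‖ := by
      have h1 : ‖TL S (TL Gp z)‖^2 ≤ sNorm (Gpᵀ * Sig * Gp) * ‖z‖^2 := by
        rw [← hquadS, hGpquad]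
        calc ⟪z, TL (Gpᵀ * Sig * Gp) z⟫ ≤ ‖z‖ * ‖TL (Gpᵀ * Sig * Gp) z‖ :=
              real_inner_le_norm _ _
          _ ≤ ‖z‖ * (sNorm (Gpᵀ * Sig * Gp) * ‖z‖) :=
              mul_le_mul_of_nonneg_left (hopN z) (norm_nonneg z)
          _ = sNorm (Gpᵀ * Sig * Gp) * ‖z‖^2 := by ring
      rw [← Real.sqrt_sq (norm_nonneg (TL S (TL Gp z)))]
      calc Real.sqrt (‖TL S (TL Gp z)‖^2)
          ≤ Real.sqrt (sNorm (Gpᵀ * Sig * Gp) * ‖z‖^2) := Real.sqrt_le_sqrt h1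
        _ = Real.sqrt (sNorm (Gpᵀ * Sig * Gp)) * ‖z‖ := by
            rw [Real.sqrt_mul hε0, Real.sqrt_sq (norm_nonneg z)]
    -- chain
    have hL : Real.sqrt (eigval Sig (Fin.castLE hK k)) * ‖TL G w + TL Gp z‖ ≤
        ‖TL S (TL G w + TL Gp z)‖ := by
      have h1 : eigval Sig (Fin.castLE hK k) * ‖TL G w + TL Gp z‖^2 ≤
          ‖TL S (TL G w + TL Gp z)‖^2 := by
        rw [← hquadS]; exact hquad
      have h2 : Real.sqrt (eigval Sig (Fin.castLE hK k) * ‖TL G w + TL Gp z‖^2) =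
          Real.sqrt (eigval Sig (Fin.castLE hK k)) * ‖TL G w + TL Gp z‖ := by
        rw [Real.sqrt_mul hlam0, Real.sqrt_sq (norm_nonneg _)]
      rw [← h2, ← Real.sqrt_sq (norm_nonneg (TL S (TL G w + TL Gp z)))]
      exact Real.sqrt_le_sqrt h1
    have hR : ‖TL S (TL G w + TL Gp z)‖ ≤
        (Real.sqrt (eigval (Gᵀ * Sig * G) k) + Real.sqrt (sNorm (Gpᵀ * Sig * Gp))) *
          ‖TL G w + TL Gp z‖ := by
      rw [map_add]
      calc ‖TL S (TL G w) + TL S (TL Gp z)‖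
          ≤ ‖TL S (TL G w)‖ + ‖TL S (TL Gp z)‖ := norm_add_le _ _
        _ ≤ Real.sqrt (eigval (Gᵀ * Sig * G) k) * ‖w‖ +
            Real.sqrt (sNorm (Gpᵀ * Sig * Gp)) * ‖z‖ := add_le_add hb1 hb2
        _ ≤ Real.sqrt (eigval (Gᵀ * Sig * G) k) * ‖TL G w + TL Gp z‖ +
            Real.sqrt (sNorm (Gpᵀ * Sig * Gp)) * ‖TL G w + TL Gp z‖ :=
            add_le_add (mul_le_mul_of_nonneg_left hwx (Real.sqrt_nonneg _))
              (mul_le_mul_of_nonneg_left hzx (Real.sqrt_nonneg _))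
        _ = (Real.sqrt (eigval (Gᵀ * Sig * G) k) + Real.sqrt (sNorm (Gpᵀ * Sig * Gp))) *
            ‖TL G w + TL Gp z‖ := by ring
    exact le_of_mul_le_mul_right (hL.trans hR) hxpos
  -- assemble
  rw [abs_sub_le_iff]
  constructor
  · linarith
  · have h1 := Real.sqrt_le_sqrt hIle
    have h2 := Real.sqrt_nonneg (sNorm (Gpᵀ * Sig * Gp))
    linarith
end

section
/- Let λ_{0,k}, λ_{0,l}, λ_k be positive real numbers and c > 1 a constant with max{ λ_{0,k}/λ_{0,l}, λ_{0,l}/λ_{0,k} } > c. Set δ(c) = min{ (1 − 1/c)/4, (1 − 1/c)/(2(2 − 1/c)), 1/2 }. If |λ_k/λ_{0,k} − 1| ≤ δ(c), then | λ_k/λ_{0,l} − 1 | ≥ (1 − 1/c)/2 and √(λ_k λ_{0,l}) / |λ_k − λ_{0,l}| ≤ (2√2 / (1 − 1/c)) · min{ √(λ_{0,l}/λ_{0,k}), √(λ_{0,k}/λ_{0,l}) }. -/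
private lemma sqrt_div_helper (A B M e : ℝ) (hB : 0 < B) (he : 0 < e) (hM : 0 ≤ M)
    (h : A * e ^ 2 ≤ 8 * M * B ^ 2) :
    Real.sqrt A / B ≤ 2 * Real.sqrt 2 / e * Real.sqrt M := by
  have hR0 : 0 ≤ 2 * Real.sqrt 2 / e * Real.sqrt M * B := by positivity
  rw [div_le_iff₀ hB]
  have h2 : Real.sqrt 2 ^ 2 = 2 := Real.sq_sqrt (by norm_num)
  have hM2 : Real.sqrt M ^ 2 = M := Real.sq_sqrt hM
  have hsq : (2 * Real.sqrt 2 / e * Real.sqrt M * B) ^ 2 = 8 * M * B ^ 2 / e ^ 2 := by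
    field_simp
    linear_combination (4 * Real.sqrt M ^ 2) * h2 + 8 * hM2
  calc Real.sqrt A ≤ Real.sqrt (8 * M * B ^ 2 / e ^ 2) := by
        apply Real.sqrt_le_sqrt
        rw [le_div_iff₀ (by positivity)]
        linarith
    _ = 2 * Real.sqrt 2 / e * Real.sqrt M * B := by
        rw [← hsq, Real.sqrt_sq hR0]

set_option maxHeartbeats 1600000 in
/-- Appendix Lemma D.3 (eigenvalue-ratio lemma for well-separated reference eigenvalues). -/
theorem statement13 (lam0k lam0l lamk c : ℝ)
    (h0k : 0 < lam0k) (h0l : 0 < lam0l) (hk : 0 < lamk) (hc : 1 < c)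
    (hsep : c < max (lam0k / lam0l) (lam0l / lam0k))
    (hclose : |lamk / lam0k - 1| ≤
      min ((1 - 1 / c) / 4) (min ((1 - 1 / c) / (2 * (2 - 1 / c))) (1 / 2))) :
    (1 - 1 / c) / 2 ≤ |lamk / lam0l - 1| ∧
      Real.sqrt (lamk * lam0l) / |lamk - lam0l| ≤
        2 * Real.sqrt 2 / (1 - 1 / c) *
          min (Real.sqrt (lam0l / lam0k)) (Real.sqrt (lam0k / lam0l)) := by
  have hc0 : 0 < c := lt_trans one_pos hc
  have hu1 : 1 / c < 1 := by rw [div_lt_one hc0]; exact hc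
  have hu0 : 0 < 1 / c := by positivity
  have he : 0 < 1 - 1 / c := by linarith
  have hd4 : |lamk / lam0k - 1| ≤ (1 - 1 / c) / 4 := hclose.trans (min_le_left _ _)
  have habs := abs_le.mp hd4
  have hkub : lamk ≤ (1 + (1 - 1 / c) / 4) * lam0k :=
    (div_le_iff₀ h0k).mp (by linarith [habs.2])
  have hklb : (1 - (1 - 1 / c) / 4) * lam0k ≤ lamk :=
    (le_div_iff₀ h0k).mp (by linarith [habs.1])
  have hub2 : lamk ≤ 2 * lam0k := by nlinarith [hkub, mul_pos hu0 h0k]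
  rcases lt_max_iff.mp hsep with hA | hB
  · -- Case A : c < lam0k / lam0l
    have hll : c * lam0l < lam0k := (lt_div_iff₀ h0l).mp hA
    have hlt : lam0l < 1 / c * lam0k := by
      have h := mul_lt_mul_of_pos_left hll hu0
      rwa [← mul_assoc, one_div_mul_cancel (ne_of_gt hc0), one_mul] at h
    have hkl : lam0l ≤ lam0k := by
      have h := mul_lt_mul_of_pos_right hu1 h0k
      linarith [hlt]
    have keyA : 3 / 4 * ((1 - 1 / c) * lam0k) ≤ lamk - lam0l := by
      linarith [hklb, hlt]
    have hdpos : 0 < lamk - lam0l := by nlinarith [keyA, mul_pos he h0k]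
    have hprod : (1 - 1 / c) * lam0l ≤ (1 - 1 / c) * lam0k :=
      mul_le_mul_of_nonneg_left hkl he.le
    constructor
    · have h1 : ((1 - 1 / c) / 2 + 1) * lam0l ≤ lamk := by nlinarith [keyA, hprod]
      have h2 : (1 - 1 / c) / 2 + 1 ≤ lamk / lam0l := (le_div_iff₀ h0l).mpr h1
      calc (1 - 1 / c) / 2 ≤ lamk / lam0l - 1 := by linarith
        _ ≤ |lamk / lam0l - 1| := le_abs_self _
    · have hmin : min (Real.sqrt (lam0l / lam0k)) (Real.sqrt (lam0k / lam0l))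
          = Real.sqrt (lam0l / lam0k) := by
        apply min_eq_left
        apply Real.sqrt_le_sqrt
        rw [div_le_div_iff₀ h0k h0l]
        nlinarith [hkl, h0l, h0k]
      rw [hmin, abs_of_pos hdpos]
      apply sqrt_div_helper _ _ _ _ hdpos he (by positivity)
      rw [show (8 : ℝ) * (lam0l / lam0k) * (lamk - lam0l) ^ 2
            = 8 * lam0l * (lamk - lam0l) ^ 2 / lam0k by ring,
        le_div_iff₀ h0k]
      have hd2 : (3 / 4 * ((1 - 1 / c) * lam0k)) ^ 2 ≤ (lamk - lam0l) ^ 2 :=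
        pow_le_pow_left₀ (by positivity) keyA 2
      nlinarith [mul_le_mul_of_nonneg_left hd2 (by positivity : (0:ℝ) ≤ 8 * lam0l),
        mul_le_mul_of_nonneg_left hub2
          (by positivity : (0:ℝ) ≤ (1 - 1 / c) ^ 2 * lam0k * lam0l),
        mul_pos (mul_pos (pow_pos he 2) (pow_pos h0k 2)) h0l]
  · -- Case B : c < lam0l / lam0k
    have hll : c * lam0k < lam0l := (lt_div_iff₀ h0k).mp hB
    have hlt : lam0k < 1 / c * lam0l := by
      have h := mul_lt_mul_of_pos_left hll hu0
      rwa [← mul_assoc, one_div_mul_cancel (ne_of_gt hc0), one_mul] at h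
    have hkl : lam0k ≤ lam0l := by
      have h := mul_lt_mul_of_pos_right hu1 h0l
      linarith [hlt]
    have s1 : lamk ≤ (1 + (1 - 1 / c) / 4) * (1 / c * lam0l) :=
      hkub.trans (mul_le_mul_of_nonneg_left hlt.le (by linarith))
    have keyB : 3 / 4 * ((1 - 1 / c) * lam0l) ≤ lam0l - lamk := by
      nlinarith [s1, mul_nonneg (sq_nonneg (1 - 1 / c)) h0l.le]
    have hdpos : 0 < lam0l - lamk := by nlinarith [keyB, mul_pos he h0l]
    constructor
    · have h1 : lamk ≤ (1 - 3 / 4 * (1 - 1 / c)) * lam0l := by linarith [keyB]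
      have h2 : lamk / lam0l ≤ 1 - 3 / 4 * (1 - 1 / c) := (div_le_iff₀ h0l).mpr h1
      calc (1 - 1 / c) / 2 ≤ 1 - lamk / lam0l := by linarith
        _ ≤ |1 - lamk / lam0l| := le_abs_self _
        _ = |lamk / lam0l - 1| := abs_sub_comm _ _
    · have hmin : min (Real.sqrt (lam0l / lam0k)) (Real.sqrt (lam0k / lam0l))
          = Real.sqrt (lam0k / lam0l) := by
        apply min_eq_right
        apply Real.sqrt_le_sqrt
        rw [div_le_div_iff₀ h0l h0k]
        nlinarith [hkl, h0l, h0k]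
      rw [hmin, abs_sub_comm, abs_of_pos hdpos]
      apply sqrt_div_helper _ _ _ _ hdpos he (by positivity)
      rw [show (8 : ℝ) * (lam0k / lam0l) * (lam0l - lamk) ^ 2
            = 8 * lam0k * (lam0l - lamk) ^ 2 / lam0l by ring,
        le_div_iff₀ h0l]
      have hd2 : (3 / 4 * ((1 - 1 / c) * lam0l)) ^ 2 ≤ (lam0l - lamk) ^ 2 :=
        pow_le_pow_left₀ (by positivity) keyB 2
      nlinarith [mul_le_mul_of_nonneg_left hd2 (by positivity : (0:ℝ) ≤ 8 * lam0k),
        mul_le_mul_of_nonneg_left hub2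
          (by positivity : (0:ℝ) ≤ (1 - 1 / c) ^ 2 * lam0l ^ 2),
        mul_pos (mul_pos (pow_pos he 2) (pow_pos h0l 2)) h0k]
end
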